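/- Let R be an integrally closed Noetherian domain. Then R equals the intersection, inside its fraction field, of the localizations R_p over all height-one prime ideals p of R. -/

import Mathlib

theorem aux_assoc_prime {R : Type*} [CommRing R] [IsDomain R] [IsNoetherianRing R]
    [IsIntegrallyClosed R] {b : R} (hb : b ≠ 0) {P : Ideal R}
    (hP : IsAssociatedPrime P (R ⧸ Ideal.span {b})) :
    P ≠ ⊥ ∧ ∀ Q : Ideal R, Q.IsPrime → Q < P → Q = ⊥ := by
  obtain ⟨hprime, y, hy⟩ := isAssociatedPrime_iff.mp hP
  haveI : P.IsPrime := hprime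
  obtain ⟨a', rfl⟩ := Ideal.Quotient.mk_surjective y
  have mem_P : ∀ t : R, t ∈ P ↔ t * a' ∈ Ideal.span {b} := by
    intro t
    rw [hy, Submodule.mem_colon_singleton, Submodule.mem_bot]
    have : t • (Ideal.Quotient.mk (Ideal.span {b}) a')
        = Ideal.Quotient.mk (Ideal.span {b}) (t * a') := rfl
    rw [this, Ideal.Quotient.eq_zero_iff_mem]
  have hPb : b ∈ P := (mem_P b).mpr (Ideal.mem_span_singleton.mpr ⟨a', rfl⟩)
  have ha' : a' ∉ Ideal.span {b} := by
    intro h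
    apply hprime.ne_top
    rw [hy, show (Ideal.Quotient.mk (Ideal.span {b}) a') = 0 from
      (Ideal.Quotient.eq_zero_iff_mem).mpr h]
    exact Submodule.eq_top_iff'.mpr fun r => Submodule.mem_colon_singleton.mpr (by simp)
  have ha'0 : a' ≠ 0 := fun h => ha' (h ▸ Ideal.zero_mem _)
  have hinj : Function.Injective (algebraMap R (FractionRing R)) :=
    IsFractionRing.injective R (FractionRing R)
  have hib : algebraMap R (FractionRing R) b ≠ 0 := fun h =>
    hb (hinj (h.trans (map_zero _).symm))
  set i := algebraMap R (FractionRing R) with hidef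
  set z : FractionRing R := i a' / i b with hz
  have hz_mul : ∀ t ∈ P, ∃ c : R, t * a' = c * b ∧ z * i t = i c := by
    intro t ht
    obtain ⟨c, hc⟩ := Ideal.mem_span_singleton.mp ((mem_P t).mp ht)
    refine ⟨c, by rw [hc, mul_comm], ?_⟩
    rw [hz, div_mul_eq_mul_div, div_eq_iff hib, ← map_mul, ← map_mul, mul_comm a' t, hc,
      mul_comm b c]
  have hzR : z ∉ (algebraMap R (FractionRing R)).range := by
    rintro ⟨c, hc⟩
    apply ha'
    rw [hz, eq_comm, div_eq_iff hib, ← map_mul] at hc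
    exact Ideal.mem_span_singleton.mpr ⟨c, (hinj hc).trans (mul_comm c b)⟩
  have key : ∃ t0 ∈ P, ∃ u : R, t0 * a' = u * b ∧ u ∉ P := by
    by_contra hcon
    push_neg at hcon
    set N : Submodule R (FractionRing R) :=
      Submodule.map (Algebra.linearMap R (FractionRing R)) (P : Submodule R R) with hN
    have hN1 : N ≠ ⊥ := by
      intro h
      apply hib
      have : i b ∈ N := ⟨b, hPb, rfl⟩
      rwa [h, Submodule.mem_bot] at this
    have hNfg : N.FG := (IsNoetherian.noetherian (P : Submodule R R)).map _
    have hstab : ∀ n ∈ N, z • n ∈ N := by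
      rintro n ⟨t, ht, rfl⟩
      obtain ⟨c, hc, hzc⟩ := hz_mul t ht
      exact ⟨c, hcon t ht c hc, by rw [smul_eq_mul]; exact hzc.symm⟩
    have hint := isIntegral_of_smul_mem_submodule N hN1 hNfg z hstab
    obtain ⟨c, hc⟩ := IsIntegrallyClosed.isIntegral_iff.mp hint
    exact hzR ⟨c, hc⟩
  obtain ⟨t0, ht0, u, ht0u, hu⟩ := key
  -- localize at P
  haveI : IsNoetherianRing (Localization.AtPrime P) :=
    IsLocalization.isNoetherianRing P.primeCompl (Localization.AtPrime P) ‹_›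
  have hprin : (IsLocalRing.maximalIdeal (Localization.AtPrime P)).IsPrincipal := by
    refine ⟨algebraMap R (Localization.AtPrime P) t0, le_antisymm ?_ ?_⟩
    · rw [← Localization.AtPrime.map_eq_maximalIdeal (I := P), Ideal.map_le_iff_le_comap]
      intro t ht
      obtain ⟨c, hc, -⟩ := hz_mul t ht
      have huc : u * t = c * t0 := by
        have h1 : (u * t) * a' = (c * t0) * a' := by
          calc (u * t) * a' = u * (t * a') := by ring
          _ = u * (c * b) := by rw [hc]
          _ = c * (u * b) := by ring
          _ = c * (t0 * a') := by rw [← ht0u]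
          _ = (c * t0) * a' := by ring
        exact mul_right_cancel₀ ha'0 h1
      obtain ⟨v, hv⟩ := isUnit_iff_exists_inv.mp
        (IsLocalization.map_units (Localization.AtPrime P) (⟨u, hu⟩ : P.primeCompl))
      show algebraMap R (Localization.AtPrime P) t
        ∈ Ideal.span {algebraMap R (Localization.AtPrime P) t0}
      refine Ideal.mem_span_singleton'.mpr ⟨v * algebraMap R (Localization.AtPrime P) c, ?_⟩
      have h2 : algebraMap R (Localization.AtPrime P) u * algebraMap R (Localization.AtPrime P) t
          = algebraMap R (Localization.AtPrime P) c
            * algebraMap R (Localization.AtPrime P) t0 := by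
        rw [← map_mul, ← map_mul, huc]
      calc v * algebraMap R (Localization.AtPrime P) c * algebraMap R (Localization.AtPrime P) t0
          = v * (algebraMap R (Localization.AtPrime P) c
              * algebraMap R (Localization.AtPrime P) t0) := by ring
        _ = v * (algebraMap R (Localization.AtPrime P) u
              * algebraMap R (Localization.AtPrime P) t) := by rw [h2]
        _ = (algebraMap R (Localization.AtPrime P) u * v)
              * algebraMap R (Localization.AtPrime P) t := by ring
        _ = algebraMap R (Localization.AtPrime P) t := by rw [hv, one_mul]
    · have : algebraMap R (Localization.AtPrime P) t0 ∈
          IsLocalRing.maximalIdeal (Localization.AtPrime P) := by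
        rw [← Localization.AtPrime.map_eq_maximalIdeal (I := P)]
        exact Ideal.mem_map_of_mem _ ht0
      exact (Ideal.span_le (α := Localization.AtPrime P)).mpr
        (Set.singleton_subset_iff.mpr this)
  have htop : ∀ Q : Ideal (Localization.AtPrime P), Q ≠ ⊥ → Q.IsPrime →
      Q = IsLocalRing.maximalIdeal (Localization.AtPrime P) :=
by
    have tf := (tfae_of_isNoetherianRing_of_isLocalRing_of_isDomain
      (Localization.AtPrime P)).out 4 3
    exact (tf.mp hprin).2
  constructor
  · intro h
    rw [h] at hPb
    exact hb (by simpa using hPb)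
  · intro Q hQ hQP
    have hdisj : Disjoint (P.primeCompl : Set R) (Q : Set R) := by
      rw [Set.disjoint_left]
      intro r hr hrQ
      exact hr (hQP.le hrQ)
    have hcomap : (Q.map (algebraMap R (Localization.AtPrime P))).comap
        (algebraMap R (Localization.AtPrime P)) = Q :=
      IsLocalization.under_map_of_isPrime_disjoint P.primeCompl _ hQ hdisj
    have hQ' : (Q.map (algebraMap R (Localization.AtPrime P))).IsPrime :=
      IsLocalization.isPrime_of_isPrime_disjoint P.primeCompl _ Q hQ hdisj
    by_contra hQ0
    have hne : Q.map (algebraMap R (Localization.AtPrime P)) ≠ ⊥ := by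
      intro h
      apply hQ0
      rw [← hcomap, h, Ideal.comap_bot_of_injective _
        (IsLocalization.injective _ P.primeCompl_le_nonZeroDivisors)]
    have := htop _ hne hQ'
    apply hQP.ne
    rw [← hcomap, this]
    exact Localization.AtPrime.under_maximalIdeal ..
/-- Height-one conclusion from the aux lemma data. -/
theorem aux_height_one {R : Type*} [CommRing R] [IsDomain R] {P : Ideal R} (hP : P.IsPrime)
    (h0 : P ≠ ⊥) (h1 : ∀ Q : Ideal R, Q.IsPrime → Q < P → Q = ⊥) :
    Order.height (⟨P, hP⟩ : PrimeSpectrum R) = 1 := by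
  have hbotp : (⊥ : Ideal R).IsPrime := Ideal.bot_prime
  have hlt : (⟨⊥, hbotp⟩ : PrimeSpectrum R) < ⟨P, hP⟩ := by
    refine lt_of_le_of_ne (fun x hx => ?_) ?_
    · simp only [Ideal.mem_bot] at hx; exact hx ▸ P.zero_mem
    · intro h
      exact h0 (congrArg PrimeSpectrum.asIdeal h).symm
  apply le_antisymm
  · rw [show (1 : ℕ∞) = ((1 : ℕ) : ℕ∞) from rfl, Order.height_le_coe_iff]
    intro q hq
    have hq0 : q.asIdeal = ⊥ := h1 q.asIdeal q.isPrime hq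
    have : IsMin q := by
      intro r hr
      have : r.asIdeal = q.asIdeal := le_antisymm hr (hq0 ▸ bot_le)
      exact le_of_eq (PrimeSpectrum.ext this).symm
    rw [Order.height_eq_zero.mpr this]
    exact zero_lt_one
  · rw [ENat.one_le_iff_ne_zero, Ne, Order.height_eq_zero]
    intro hmin
    exact absurd (hmin hlt.le) (not_le_of_gt hlt)

/-- An integrally closed Noetherian domain is the intersection, inside its fraction field,
of its localizations at the height-one primes: an element of the fraction field lies in `R`
iff at every height-one prime it can be written with denominator outside that prime. -/
theorem stmt_12 (R : Type*) [CommRing R] [IsDomain R] [IsNoetherianRing R]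
    [IsIntegrallyClosed R] (x : FractionRing R) :
    x ∈ (algebraMap R (FractionRing R)).range ↔
      ∀ p : PrimeSpectrum R, Order.height p = 1 →
        ∃ a s : R, s ∉ p.asIdeal ∧
          x * algebraMap R (FractionRing R) s = algebraMap R (FractionRing R) a := by
  constructor
  · rintro ⟨a, rfl⟩ p _
    exact ⟨a, 1, fun h => p.isPrime.ne_top ((Ideal.eq_top_iff_one _).mpr h), by rw [map_one, mul_one]⟩
  · intro H
    by_contra hx
    obtain ⟨⟨a, s⟩, hmk⟩ := IsLocalization.mk'_surjective (nonZeroDivisors R) x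
    set b : R := (s : R) with hbdef
    have hb : b ≠ 0 := nonZeroDivisors.coe_ne_zero s
    have hinj : Function.Injective (algebraMap R (FractionRing R)) :=
      IsFractionRing.injective R (FractionRing R)
    have hxb : x * algebraMap R (FractionRing R) b = algebraMap R (FractionRing R) a := by
      rw [← hmk]; exact IsLocalization.mk'_spec _ a s
    have hanb : a ∉ Ideal.span {b} := by
      intro h
      obtain ⟨c, hc⟩ := Ideal.mem_span_singleton.mp h
      apply hx
      refine ⟨c, ?_⟩
      have hub : IsUnit (algebraMap R (FractionRing R) b) :=
        IsLocalization.map_units (FractionRing R) s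
      apply hub.mul_right_cancel
      rw [hxb, hc, map_mul, mul_comm]
    have hne : Ideal.Quotient.mk (Ideal.span {b}) a ≠ 0 :=
      fun h => hanb (Ideal.Quotient.eq_zero_iff_mem.mp h)
    obtain ⟨P, hPassoc, hle⟩ :=
      exists_le_isAssociatedPrime_of_isNoetherianRing R (Ideal.Quotient.mk (Ideal.span {b}) a) hne
    obtain ⟨h0, h1⟩ := aux_assoc_prime hb hPassoc
    obtain ⟨a₁, s₁, hs₁, heq⟩ := H ⟨P, hPassoc.isPrime⟩
      (aux_height_one hPassoc.isPrime h0 h1)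
    apply hs₁
    apply hle
    rw [Submodule.mem_colon_singleton, Submodule.mem_bot]
    have : s₁ • (Ideal.Quotient.mk (Ideal.span {b}) a)
        = Ideal.Quotient.mk (Ideal.span {b}) (s₁ * a) := rfl
    rw [this, Ideal.Quotient.eq_zero_iff_mem]
    have hkey : algebraMap R (FractionRing R) (s₁ * a)
        = algebraMap R (FractionRing R) (a₁ * b) := by
      rw [map_mul, map_mul, ← hxb, ← heq]; ring
    rw [hinj hkey]
    exact Ideal.mem_span_singleton.mpr ⟨a₁, mul_comm a₁ b⟩
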